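/- Let A be a symmetric real N×N matrix and b ∈ ℝ^N, and suppose the N×(N+1) block matrix [A b] has rank N. Let H be the (2N+1)×(2N+1) real symmetric matrix with block form H = [[A, 0, b], [0, −A, −b], [bᵀ, −bᵀ, 0]]. Then, counting with multiplicity, H has exactly N negative eigenvalues, exactly N positive eigenvalues, and the eigenvalue 0 with multiplicity exactly one. In particular the index of H is N. -/

import Mathlib

open Matrix Polynomial

lemma aux_charpoly_diagonal {n : Type*} [Fintype n] [DecidableEq n] (d : n → ℝ) :
    (Matrix.diagonal d).charpoly = ∏ i, (X - C (d i)) := by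
  have h : charmatrix (Matrix.diagonal d) = Matrix.diagonal (fun i => (X : ℝ[X]) - C (d i)) := by
    ext i j
    by_cases hij : i = j
    · subst hij; simp [charmatrix_apply, Matrix.diagonal_apply_eq]
    · simp [charmatrix_apply, Matrix.diagonal_apply_ne _ hij, Matrix.one_apply_ne hij]
  rw [Matrix.charpoly, h, Matrix.det_diagonal]

lemma aux_charpoly_conj {n : Type*} [Fintype n] [DecidableEq n] (U D V : Matrix n n ℝ)
    (hUV : U * V = 1) : (U * D * V).charpoly = D.charpoly := by
  have hmap : ∀ (M P : Matrix n n ℝ), (M * P).map (C : ℝ →+* ℝ[X]) = M.map C * P.map C := by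
    intro M P; exact Matrix.map_mul
  have hscalar : U.map (C : ℝ →+* ℝ[X]) * Matrix.scalar n (X : ℝ[X]) * V.map C
      = Matrix.scalar n (X : ℝ[X]) := by
    have hc := (Matrix.scalar_commute (X : ℝ[X]) (Commute.all _) (U.map (C : ℝ →+* ℝ[X]))).eq
    rw [← hc, mul_assoc, ← hmap, hUV]
    simp
  have key : charmatrix (U * D * V) = U.map C * charmatrix D * V.map C := by
    rw [charmatrix, charmatrix, RingHom.mapMatrix_apply, RingHom.mapMatrix_apply, hmap, hmap, Matrix.mul_sub, Matrix.sub_mul, hscalar, mul_assoc]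
  have hdet : (U.map (C : ℝ →+* ℝ[X])).det * (V.map C).det = 1 := by
    rw [← Matrix.det_mul, ← hmap, hUV]; simp
  rw [Matrix.charpoly, Matrix.charpoly, key, Matrix.det_mul, Matrix.det_mul]
  ring_nf
  rw [mul_comm, ← mul_assoc, mul_comm ((V.map C).det)]
  rw [hdet, one_mul]

lemma aux_charpoly_eig {n : Type*} [Fintype n] [DecidableEq n] {H : Matrix n n ℝ}
    (hH : H.IsHermitian) : H.charpoly = ∏ i, (X - C (hH.eigenvalues i)) := by
  have hU : (hH.eigenvectorUnitary : Matrix n n ℝ) * (star hH.eigenvectorUnitary : Matrix n n ℝ) = 1 := by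
    simpa using (Matrix.mem_unitaryGroup_iff.mp hH.eigenvectorUnitary.2)
  conv_lhs => rw [hH.spectral_theorem, Unitary.conjStarAlgAut_apply]
  rw [aux_charpoly_conj _ _ _ hU, aux_charpoly_diagonal]
  simp

lemma aux_charpoly_neg_eig {n : Type*} [Fintype n] [DecidableEq n] {H : Matrix n n ℝ}
    (hH : H.IsHermitian) : (-H).charpoly = ∏ i, (X - C (-hH.eigenvalues i)) := by
  have hU : (hH.eigenvectorUnitary : Matrix n n ℝ) * (star hH.eigenvectorUnitary : Matrix n n ℝ) = 1 := by
    simpa using (Matrix.mem_unitaryGroup_iff.mp hH.eigenvectorUnitary.2)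
  have : -H = (hH.eigenvectorUnitary : Matrix n n ℝ) *
      Matrix.diagonal (fun i => -hH.eigenvalues i) * (star hH.eigenvectorUnitary : Matrix n n ℝ) := by
    conv_lhs => rw [hH.spectral_theorem, Unitary.conjStarAlgAut_apply]
    rw [← neg_mul, ← Matrix.mul_neg]
    congr 2
    rw [← Matrix.diagonal_neg]
    norm_num [Function.comp]
  rw [this, aux_charpoly_conj _ _ _ hU, aux_charpoly_diagonal]

-- count lemma for symmetric multisets
lemma aux_count_symm (s : Multiset ℝ) (hs : s = s.map (fun x => -x)) :
    s.countP (fun x => x < 0) = s.countP (fun x => 0 < x) := by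
  conv_lhs => rw [hs]
  rw [Multiset.countP_map, Multiset.countP_eq_card_filter]
  congr 1
  apply Multiset.filter_congr
  intro x _
  constructor
  · exact fun h => by linarith
  · exact fun h => by linarith

/-- Lemma 6.1: the Hessian block matrix `H = [[A, 0, b], [0, -A, -b], [bᵀ, -bᵀ, 0]]`,
for `A` symmetric with `[A b]` of full rank `N`, has exactly `N` negative
eigenvalues, exactly `N` positive eigenvalues and the eigenvalue `0` with
multiplicity one; in particular its index is `N`. -/
theorem stmt_6 {N : ℕ} (A : Matrix (Fin N) (Fin N) ℝ) (hA : Aᵀ = A) (b : Fin N → ℝ)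
    (hrank : (Matrix.fromCols A (Matrix.replicateCol Unit b)).rank = N)
    (H : Matrix (Fin N ⊕ Fin N ⊕ Unit) (Fin N ⊕ Fin N ⊕ Unit) ℝ)
    (hHdef : ∀ i j, H i j =
      match i, j with
      | Sum.inl i, Sum.inl j => A i j
      | Sum.inl _, Sum.inr (Sum.inl _) => 0
      | Sum.inl i, Sum.inr (Sum.inr _) => b i
      | Sum.inr (Sum.inl _), Sum.inl _ => 0
      | Sum.inr (Sum.inl i), Sum.inr (Sum.inl j) => -A i j
      | Sum.inr (Sum.inl i), Sum.inr (Sum.inr _) => -b i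
      | Sum.inr (Sum.inr _), Sum.inl j => b j
      | Sum.inr (Sum.inr _), Sum.inr (Sum.inl j) => -b j
      | Sum.inr (Sum.inr _), Sum.inr (Sum.inr _) => 0)
    (hH : H.IsHermitian) :
    (Finset.univ.filter fun i => hH.eigenvalues i < 0).card = N ∧
    (Finset.univ.filter fun i => 0 < hH.eigenvalues i).card = N ∧
    (Finset.univ.filter fun i => hH.eigenvalues i = 0).card = 1 := by
  classical
  -- the swap involution
  let f : (Fin N ⊕ Fin N ⊕ Unit) → (Fin N ⊕ Fin N ⊕ Unit) := Sum.elim (fun i => Sum.inr (Sum.inl i))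
      (Sum.elim Sum.inl (fun u => Sum.inr (Sum.inr u)))
  let σ : (Fin N ⊕ Fin N ⊕ Unit) ≃ (Fin N ⊕ Fin N ⊕ Unit) := ⟨f, f, by rintro (i | i | u) <;> rfl, by rintro (i | i | u) <;> rfl⟩
  -- reindexing by σ negates H
  have hre : Matrix.reindex σ σ H = -H := by
    ext i j
    rcases i with i | i | u <;> rcases j with j | j | u' <;>
      simp [Matrix.reindex_apply, Matrix.submatrix_apply, σ, f, hHdef]
  -- charpoly of -H equals charpoly of H
  have hcp : (-H).charpoly = H.charpoly := by
    rw [← hre]; exact Matrix.charpoly_reindex σ H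
  -- explicit mulVec formulas
  have hHmul : ∀ v : (Fin N ⊕ Fin N ⊕ Unit) → ℝ, H.mulVec v = Sum.elim
      (fun i => (∑ j, A i j * v (Sum.inl j)) + b i * v (Sum.inr (Sum.inr ())))
      (Sum.elim
        (fun i => (∑ j, -(A i j * v (Sum.inr (Sum.inl j)))) - b i * v (Sum.inr (Sum.inr ())))
        (fun _ => (∑ j, b j * v (Sum.inl j)) - ∑ j, b j * v (Sum.inr (Sum.inl j)))) := by
    intro v
    funext i
    rcases i with i | i | u <;>
      simp [Matrix.mulVec, dotProduct, Fintype.sum_sum_type, hHdef, Finset.sum_sub_distrib,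
        neg_mul, sub_eq_add_neg]
  set M := Matrix.fromCols A (Matrix.replicateCol Unit b) with hM
  have hMmul : ∀ w : (Fin N ⊕ Unit) → ℝ, M.mulVec w =
      fun i => (∑ j, A i j * w (Sum.inl j)) + b i * w (Sum.inr ()) := by
    intro w
    funext i
    simp [hM, Matrix.mulVec, dotProduct, Fintype.sum_sum_type, Matrix.fromCols,
      Matrix.replicateCol]
  -- injectivity from the rank hypothesis
  have hMrank : M.rank = N := hrank
  have hinj : ∀ u : Fin N → ℝ, A.mulVec u = 0 → b ⬝ᵥ u = 0 → u = 0 := by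
    intro u h1 h2
    have hMt : Mᵀ.rank = N := by rw [Matrix.rank_transpose, hMrank]
    have hker : LinearMap.ker (Mᵀ.mulVecLin) = ⊥ := by
      have h3 := LinearMap.finrank_range_add_finrank_ker (Mᵀ.mulVecLin)
      have h4 : Module.finrank ℝ (LinearMap.range (Mᵀ.mulVecLin)) = N := hMt
      have h5 : Module.finrank ℝ (Fin N → ℝ) = N := by simp
      rw [h4, h5] at h3
      have h6 : Module.finrank ℝ (LinearMap.ker (Mᵀ.mulVecLin)) = 0 := by omega
      exact Submodule.finrank_eq_zero.mp h6
    have hu : Mᵀ.mulVec u = 0 := by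
      rw [hM, Matrix.transpose_fromCols]
      funext i
      rcases i with i | i'
      · rw [Matrix.fromRows_mulVec]
        simp [hA]
        exact congrFun h1 i
      · rw [Matrix.fromRows_mulVec]
        simpa [Matrix.transpose_replicateCol, Matrix.mulVec, dotProduct,
          Matrix.replicateRow] using h2
    have := hker.le (show u ∈ LinearMap.ker (Mᵀ.mulVecLin) from hu)
    simpa using this
  -- the injection Φ
  let Φ : ((Fin N ⊕ Unit) → ℝ) →ₗ[ℝ] ((Fin N ⊕ Fin N ⊕ Unit) → ℝ) :=
    { toFun := fun w => Sum.elim (w ∘ Sum.inl) (Sum.elim (w ∘ Sum.inl) (w ∘ Sum.inr)),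
      map_add' := by intro w₁ w₂; funext i; rcases i with i | i | u <;> rfl,
      map_smul' := by intro c w; funext i; rcases i with i | i | u <;> rfl }
  have hΦinj : Function.Injective Φ := by
    intro w₁ w₂ h
    funext i
    rcases i with i | u
    · exact congrFun h (Sum.inl i)
    · exact congrFun h (Sum.inr (Sum.inr u))
  -- kernels correspond
  have hkerH : LinearMap.ker H.mulVecLin = Submodule.map Φ (LinearMap.ker M.mulVecLin) := by
    ext v
    simp only [LinearMap.mem_ker, Submodule.mem_map, Matrix.mulVecLin_apply]
    constructor
    · intro hv
      rw [hHmul v] at hv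
      have e1 : ∀ i, (∑ j, A i j * v (Sum.inl j)) + b i * v (Sum.inr (Sum.inr ())) = 0 :=
        fun i => congrFun hv (Sum.inl i)
      have e2 : ∀ i, (∑ j, -(A i j * v (Sum.inr (Sum.inl j)))) - b i * v (Sum.inr (Sum.inr ())) = 0 :=
        fun i => congrFun hv (Sum.inr (Sum.inl i))
      have e3 : (∑ j, b j * v (Sum.inl j)) - ∑ j, b j * v (Sum.inr (Sum.inl j)) = 0 :=
        congrFun hv (Sum.inr (Sum.inr ()))
      set ξ : Fin N → ℝ := fun j => v (Sum.inl j) with hξ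
      set η : Fin N → ℝ := fun j => v (Sum.inr (Sum.inl j)) with hη
      set τ : ℝ := v (Sum.inr (Sum.inr ())) with hτ
      have hdiff : ξ = η := by
        have hAd : A.mulVec (ξ - η) = 0 := by
          funext i
          have := e1 i
          have := e2 i
          simp only [Matrix.mulVec, dotProduct, Pi.sub_apply, Pi.zero_apply]
          have hs : ∑ j, A i j * (ξ j - η j)
              = (∑ j, A i j * ξ j) - ∑ j, A i j * η j := by
            rw [← Finset.sum_sub_distrib]; congr 1; funext j; ring
          rw [hs]
          have h2' : (∑ j, A i j * η j) + b i * τ = 0 := by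
            have := e2 i
            have hneg : (∑ j, -(A i j * η j)) = -∑ j, A i j * η j := by
              rw [Finset.sum_neg_distrib]
            rw [hneg] at this
            linarith
          have h1' := e1 i
          linarith
        have hbd : b ⬝ᵥ (ξ - η) = 0 := by
          simp only [dotProduct, Pi.sub_apply]
          have hs : ∑ j, b j * (ξ j - η j) = (∑ j, b j * ξ j) - ∑ j, b j * η j := by
            rw [← Finset.sum_sub_distrib]; congr 1; funext j; ring
          rw [hs]
          linarith [e3]
        have := hinj (ξ - η) hAd hbd
        funext j
        have := congrFun this j
        simp only [Pi.sub_apply, Pi.zero_apply] at this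
        linarith
      refine ⟨Sum.elim ξ (fun _ => τ), ?_, ?_⟩
      · rw [hMmul]
        funext i
        simpa using e1 i
      · funext i
        rcases i with i | i | u
        · rfl
        · exact congrFun hdiff i
        · rfl
    · rintro ⟨w, hw, rfl⟩
      rw [hHmul]
      have hw' : ∀ i, (∑ j, A i j * w (Sum.inl j)) + b i * w (Sum.inr ()) = 0 := by
        rw [hMmul] at hw
        exact fun i => congrFun hw i
      funext i
      rcases i with i | i | u
      · exact hw' i
      · show (∑ j, -(A i j * w (Sum.inl j))) - b i * w (Sum.inr ()) = 0
        have hneg : (∑ j, -(A i j * w (Sum.inl j))) = -∑ j, A i j * w (Sum.inl j) := by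
          rw [Finset.sum_neg_distrib]
        rw [hneg]
        linarith [hw' i]
      · show (∑ j, b j * w (Sum.inl j)) - ∑ j, b j * w (Sum.inl j) = 0
        exact sub_self _
  -- nullity of H is 1
  have hkerM : Module.finrank ℝ (LinearMap.ker M.mulVecLin) = 1 := by
    have h3 := LinearMap.finrank_range_add_finrank_ker (M.mulVecLin)
    have h4 : Module.finrank ℝ (LinearMap.range (M.mulVecLin)) = N := hMrank
    have h5 : Module.finrank ℝ ((Fin N ⊕ Unit) → ℝ) = N + 1 := by simp
    rw [h4, h5] at h3
    omega
  have hnullH : Module.finrank ℝ (LinearMap.ker H.mulVecLin) = 1 := by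
    rw [hkerH, ← (Submodule.equivMapOfInjective Φ hΦinj _).finrank_eq]
    exact hkerM
  have hrankH : H.rank = 2 * N := by
    have h3 := LinearMap.finrank_range_add_finrank_ker (H.mulVecLin)
    have h5 : Module.finrank ℝ ((Fin N ⊕ Fin N ⊕ Unit) → ℝ) = 2 * N + 1 := by
      simp; omega
    rw [hnullH, h5] at h3
    have : H.rank = Module.finrank ℝ (LinearMap.range (H.mulVecLin)) := rfl
    omega
  -- the eigenvalue multiset is symmetric under negation
  set s : Multiset ℝ := Finset.univ.val.map hH.eigenvalues with hs_def
  have hsym : s = s.map (fun x => -x) := by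
    have h1 := aux_charpoly_eig hH
    have h2 := aux_charpoly_neg_eig hH
    have h12 : (∏ i, (X - C (hH.eigenvalues i)) : ℝ[X])
        = ∏ i, (X - C (-hH.eigenvalues i)) := by
      rw [← h1, ← h2, hcp]
    have e1 : (∏ i, (X - C (hH.eigenvalues i)) : ℝ[X])
        = (s.map (fun a => X - C a)).prod := by
      rw [hs_def, Multiset.map_map, Finset.prod_eq_multiset_prod]
      rfl
    have e2 : (∏ i, (X - C (-hH.eigenvalues i)) : ℝ[X])
        = ((s.map (fun x => -x)).map (fun a => X - C a)).prod := by
      rw [hs_def, Multiset.map_map, Multiset.map_map, Finset.prod_eq_multiset_prod]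
      rfl
    have := congrArg Polynomial.roots (e1.symm.trans (h12.trans e2))
    rwa [Polynomial.roots_multiset_prod_X_sub_C, Polynomial.roots_multiset_prod_X_sub_C] at this
  -- translate Finset.filter cards to countP on s
  have hPc : (Finset.univ.filter fun i => hH.eigenvalues i < 0).card
      = s.countP (fun x => x < 0) := by
    rw [hs_def, Multiset.countP_map, Finset.card_def, Finset.filter_val,
      ← Multiset.countP_eq_card_filter]
  have hQc : (Finset.univ.filter fun i => 0 < hH.eigenvalues i).card
      = s.countP (fun x => 0 < x) := by
    rw [hs_def, Multiset.countP_map, Finset.card_def, Finset.filter_val,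
      ← Multiset.countP_eq_card_filter]
  have hPQ : (Finset.univ.filter fun i => hH.eigenvalues i < 0).card
      = (Finset.univ.filter fun i => 0 < hH.eigenvalues i).card := by
    rw [hPc, hQc]
    exact aux_count_symm s hsym
  -- the number of nonzero eigenvalues is the rank
  have hcardn : Fintype.card (Fin N ⊕ Fin N ⊕ Unit) = 2 * N + 1 := by
    simp; omega
  have hNZ : (Finset.univ.filter fun i => hH.eigenvalues i ≠ 0).card = 2 * N := by
    have := hH.rank_eq_card_non_zero_eigs
    rw [hrankH] at this
    rw [← Fintype.card_subtype]
    omega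
  have hZ : (Finset.univ.filter fun i => hH.eigenvalues i = 0).card = 1 := by
    have hsum := Finset.card_filter_add_card_filter_not
      (s := (Finset.univ : Finset (Fin N ⊕ Fin N ⊕ Unit)))
      (p := fun i => hH.eigenvalues i = 0)
    have hcu : (Finset.univ : Finset (Fin N ⊕ Fin N ⊕ Unit)).card = 2 * N + 1 := by
      rw [Finset.card_univ, hcardn]
    have hneg : (Finset.univ.filter fun i => ¬ hH.eigenvalues i = 0).card = 2 * N := hNZ
    omega
  -- split nonzero into negative and positive
  have hsplit : (Finset.univ.filter fun i => hH.eigenvalues i < 0).card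
      + (Finset.univ.filter fun i => 0 < hH.eigenvalues i).card = 2 * N := by
    rw [← hNZ]
    have hcong : (Finset.univ.filter fun i => hH.eigenvalues i ≠ 0)
        = (Finset.univ.filter fun i => hH.eigenvalues i < 0 ∨ 0 < hH.eigenvalues i) := by
      apply Finset.filter_congr
      intro i _
      constructor
      · exact fun h => lt_or_gt_of_ne h
      · rintro (h | h) <;> intro h0 <;> rw [h0] at h <;> exact lt_irrefl 0 h
    rw [hcong, Finset.filter_or]
    rw [Finset.card_union_of_disjoint]
    rw [Finset.disjoint_left]
    intro i hi hi'
    simp only [Finset.mem_filter] at hi hi'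
    linarith [hi.2, hi'.2]
  refine ⟨?_, ?_, hZ⟩
  · omega
  · omega
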